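/- arXiv:2510.12057 — 2 statements merged into one kernel-verified Lean document; each statement's English description precedes it below -/
import Mathlib

section
/- Let γ and γ' be scalar systems of SL_n-type. If γ({i},{j};λ) = γ'({i},{j};λ) for all pairs of distinct elements i, j ∈ {1,…,n} and all λ ∈ ℤ^n, then γ(S,T;λ) = γ'(S,T;λ) for all disjoint subsets S, T ⊆ {1,…,n} and all λ ∈ ℤ^n. -/
open Finset

/-- The indicator vector `e_S ∈ ℤ^n` of a subset `S ⊆ {1,…,n}`. -/
def eVec (n : ℕ) (S : Finset (Fin n)) : Fin n → ℤ := fun i => if i ∈ S then 1 else 0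

/-- A scalar system of `T\SL_n`-type: a family of scalars `γ(S,T;λ) ∈ k`
indexed by pairs of disjoint subsets `S, T ⊆ {1,…,n}` and `λ ∈ ℤ^n`,
invariant under `λ ↦ λ + (1,…,1)` and normalized on empty sets,
satisfying the relations (i)–(vi) of Definition 5.4 of the paper. -/
structure ScalarSystem (n : ℕ) (k : Type*) [Field k] (q : k) where
  γ : Finset (Fin n) → Finset (Fin n) → (Fin n → ℤ) → k
  periodic : ∀ (S T : Finset (Fin n)) (lam : Fin n → ℤ),
    γ S T (lam + eVec n Finset.univ) = γ S T lam
  empty_left : ∀ (T : Finset (Fin n)) (lam : Fin n → ℤ), γ ∅ T lam = 1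
  empty_right : ∀ (S : Finset (Fin n)) (lam : Fin n → ℤ), γ S ∅ lam = 1
  rel1 : ∀ (S T : Finset (Fin n)) (lam : Fin n → ℤ), Disjoint S T →
    γ S T lam * γ T S (lam - eVec n S) = 1
  rel2 : ∀ (S : Finset (Fin n)) (i j : Fin n) (lam : Fin n → ℤ),
    i ≠ j → i ∉ S → j ∉ S →
    γ (insert i S) {j} lam * γ {j} S (lam - eVec n S)
      + γ (insert j S) {i} lam * γ {i} S (lam - eVec n S) = q + q⁻¹
  rel3 : ∀ (S : Finset (Fin n)) (i j : Fin n) (lam : Fin n → ℤ),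
    i ≠ j → i ∉ S → j ∉ S →
    γ S {i} lam * γ {i} (insert j S) (lam - eVec n (insert j S))
      = γ (insert i S) {j} (lam - eVec n {j}) * γ {j} S (lam - eVec n (insert j S))
  rel4 : ∀ (S T U : Finset (Fin n)) (lam : Fin n → ℤ),
    Disjoint S T → Disjoint S U → Disjoint T U →
    γ S T (lam + eVec n U) * γ (S ∪ T) U lam = γ S (T ∪ U) lam * γ T U lam
  rel5 : ∀ (i j : Fin n) (lam : Fin n → ℤ), i ≠ j →
    γ {i} {j} lam + γ {j} {i} lam = q + q⁻¹
  rel6 : ∀ (i j l : Fin n) (lam : Fin n → ℤ), i ≠ j → j ≠ l → i ≠ l →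
    γ {i} {j, l} lam + γ {j} {l, i} lam + γ {l} {i, j} lam
      = q * q + 1 + q⁻¹ * q⁻¹

section Helpers

variable {n : ℕ} {k : Type*} [Field k] {q : k}

lemma eVec_union {S T : Finset (Fin n)} (h : Disjoint S T) :
    eVec n (S ∪ T) = eVec n S + eVec n T := by
  funext x
  simp only [eVec, Pi.add_apply, Finset.mem_union]
  by_cases hS : x ∈ S <;> by_cases hT : x ∈ T <;> simp [hS, hT]
  exact absurd (h.forall_ne_finset hS hT) (by simp)

lemma eVec_insert {S : Finset (Fin n)} {i : Fin n} (h : i ∉ S) :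
    eVec n (insert i S) = eVec n {i} + eVec n S := by
  rw [Finset.insert_eq, eVec_union (by simpa using h)]

lemma eVec_empty : eVec n ∅ = (0 : Fin n → ℤ) := by funext x; simp [eVec]

lemma ScalarSystem.ne_zero (Γ : ScalarSystem n k q) (S T : Finset (Fin n))
    (lam : Fin n → ℤ) (h : Disjoint S T) : Γ.γ S T lam ≠ 0 :=
  left_ne_zero_of_mul_eq_one (Γ.rel1 S T lam h)

lemma P1chain (Γ : ScalarSystem n k q) (S0 : Finset (Fin n)) (i j : Fin n)
    (hi : i ∉ S0) (hj : j ∉ S0) (hij : i ≠ j) (lam : Fin n → ℤ) :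
    Γ.γ (insert i S0) {j} lam * Γ.γ (insert i S0) {j} (lam + eVec n S0)
      * (Γ.γ {i} S0 (lam + eVec n {j}) * Γ.γ {j} S0 lam
         * Γ.γ S0 {i} (lam + eVec n S0 + eVec n {j}))
    = Γ.γ {i} {j} (lam + eVec n S0) * Γ.γ S0 {j} lam
        * Γ.γ {i} {j} (lam + eVec n S0) := by
  have dis : Disjoint ({i} : Finset (Fin n)) S0 := by simp [hi]
  have dij : Disjoint ({i} : Finset (Fin n)) {j} := by simp [hij, Ne.symm hij]
  have dsj : Disjoint S0 ({j} : Finset (Fin n)) := by simp [hj]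
  have dsi : Disjoint S0 ({i} : Finset (Fin n)) := by simp [hi]
  have djs : Disjoint ({j} : Finset (Fin n)) S0 := by simp [hj]
  have hA := Γ.rel4 {i} S0 {j} lam dis dij dsj
  have hB := Γ.rel4 {i} {j} S0 lam dij dis djs
  have hC := Γ.rel1 S0 ({i} ∪ {j}) (lam + eVec n S0)
    (by simp [Finset.disjoint_union_right, dsi, dsj, hi])
  have hD := Γ.rel4 S0 {i} {j} (lam + eVec n S0) dsi dsj dij
  rw [add_sub_cancel_right] at hC
  rw [show S0 ∪ {j} = {j} ∪ S0 from Finset.union_comm _ _,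
      show ({i} : Finset (Fin n)) ∪ S0 = insert i S0 from (Finset.insert_eq i S0).symm] at hA
  rw [show S0 ∪ {i} = insert i S0 from by
        rw [Finset.union_comm]; exact (Finset.insert_eq i S0).symm] at hD
  linear_combination
    (Γ.γ (insert i S0) {j} (lam + eVec n S0) * Γ.γ S0 {i} (lam + eVec n S0 + eVec n {j})
      * Γ.γ {j} S0 lam) * hA
    + (Γ.γ {i} ({j} ∪ S0) lam * Γ.γ S0 {j} lam * Γ.γ {j} S0 lam) * hD
    - (Γ.γ S0 {j} lam * Γ.γ S0 ({i} ∪ {j}) (lam + eVec n S0)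
        * Γ.γ {i} {j} (lam + eVec n S0)) * hB
    + (Γ.γ {i} {j} (lam + eVec n S0) * Γ.γ S0 {j} lam
        * Γ.γ {i} {j} (lam + eVec n S0)) * hC

lemma P2chain (Γ : ScalarSystem n k q) (S0 : Finset (Fin n)) (i j : Fin n)
    (hi : i ∉ S0) (hj : j ∉ S0) (hij : i ≠ j) (lam : Fin n → ℤ) :
    Γ.γ (insert i S0) {j} (lam - eVec n {j}) * Γ.γ (insert j S0) {i} lam
      * Γ.γ {j} S0 (lam - eVec n (insert j S0)) = Γ.γ S0 {i} lam := by
  have r3 := Γ.rel3 S0 i j lam hij hi hj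
  have r1 := Γ.rel1 (insert j S0) {i} lam
    (by simp [Finset.disjoint_insert_left, hij, Ne.symm hij, hi])
  linear_combination (Γ.γ S0 {i} lam) * r1 - (Γ.γ (insert j S0) {i} lam) * r3

end Helpers

section Cross

variable {n : ℕ} {k : Type*} [Field k] {q : k}

lemma P1x (Γ Γ' : ScalarSystem n k q)
    (hsingle : ∀ (i j : Fin n) (lam : Fin n → ℤ), i ≠ j →
      Γ.γ {i} {j} lam = Γ'.γ {i} {j} lam)
    (N : ℕ)
    (IH : ∀ (S T : Finset (Fin n)) (lam : Fin n → ℤ), Disjoint S T →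
      S.card + T.card < N → Γ.γ S T lam = Γ'.γ S T lam)
    (S0 : Finset (Fin n)) (i j : Fin n)
    (hi : i ∉ S0) (hj : j ∉ S0) (hij : i ≠ j)
    (hcard : S0.card + 2 = N) (lam : Fin n → ℤ) :
    Γ.γ (insert i S0) {j} lam * Γ.γ (insert i S0) {j} (lam + eVec n S0)
      = Γ'.γ (insert i S0) {j} lam * Γ'.γ (insert i S0) {j} (lam + eVec n S0) := by
  have dis : Disjoint ({i} : Finset (Fin n)) S0 := by simp [hi]
  have dsj : Disjoint S0 ({j} : Finset (Fin n)) := by simp [hj]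
  have dsi : Disjoint S0 ({i} : Finset (Fin n)) := by simp [hi]
  have djs : Disjoint ({j} : Finset (Fin n)) S0 := by simp [hj]
  have c1 := P1chain Γ S0 i j hi hj hij lam
  have c2 := P1chain Γ' S0 i j hi hj hij lam
  rw [IH {i} S0 _ dis (by simp; omega), IH {j} S0 _ djs (by simp; omega),
      IH S0 {i} _ dsi (by simp; omega), IH S0 {j} _ dsj (by simp; omega),
      hsingle i j _ hij] at c1
  have hK : (Γ'.γ {i} S0 (lam + eVec n {j}) * Γ'.γ {j} S0 lam
      * Γ'.γ S0 {i} (lam + eVec n S0 + eVec n {j})) ≠ 0 :=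
    mul_ne_zero (mul_ne_zero (Γ'.ne_zero _ _ _ dis) (Γ'.ne_zero _ _ _ djs))
      (Γ'.ne_zero _ _ _ dsi)
  exact mul_right_cancel₀ hK (c1.trans c2.symm)

lemma P2x (Γ Γ' : ScalarSystem n k q)
    (N : ℕ)
    (IH : ∀ (S T : Finset (Fin n)) (lam : Fin n → ℤ), Disjoint S T →
      S.card + T.card < N → Γ.γ S T lam = Γ'.γ S T lam)
    (S0 : Finset (Fin n)) (i j : Fin n)
    (hi : i ∉ S0) (hj : j ∉ S0) (hij : i ≠ j)
    (hcard : S0.card + 2 = N) (lam : Fin n → ℤ) :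
    Γ.γ (insert i S0) {j} (lam - eVec n {j}) * Γ.γ (insert j S0) {i} lam
      = Γ'.γ (insert i S0) {j} (lam - eVec n {j}) * Γ'.γ (insert j S0) {i} lam := by
  have dsi : Disjoint S0 ({i} : Finset (Fin n)) := by simp [hi]
  have djs : Disjoint ({j} : Finset (Fin n)) S0 := by simp [hj]
  have c1 := P2chain Γ S0 i j hi hj hij lam
  have c2 := P2chain Γ' S0 i j hi hj hij lam
  rw [IH {j} S0 _ djs (by simp; omega), IH S0 {i} _ dsi (by simp; omega)] at c1
  have hK : Γ'.γ {j} S0 (lam - eVec n (insert j S0)) ≠ 0 := Γ'.ne_zero _ _ _ djs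
  exact mul_right_cancel₀ hK (c1.trans c2.symm)

end Cross

lemma swap_gen {n : ℕ} {k : Type*} [Field k] (f : (Fin n → ℤ) → k) (B : Finset (Fin n))
    (hf : ∀ b ∈ B, ∀ le : Fin n → ℤ, f le * f (le + eVec n (B.erase b)) = 1)
    {x y : Fin n} (hx : x ∈ B) (hy : y ∈ B) (μ : Fin n → ℤ) :
    f (μ + eVec n {x}) = f (μ + eVec n {y}) := by
  by_cases hxy : x = y
  · rw [hxy]
  · have hyx : y ∈ B.erase x := Finset.mem_erase.mpr ⟨fun h => hxy h.symm, hy⟩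
    have hxy' : x ∈ B.erase y := Finset.mem_erase.mpr ⟨hxy, hx⟩
    have hyR : y ∉ (B.erase x).erase y := Finset.notMem_erase _ _
    have hxR : x ∉ (B.erase x).erase y := by
      rw [Finset.erase_right_comm]; exact Finset.notMem_erase _ _
    have ev1 : eVec n (B.erase x) = eVec n {y} + eVec n ((B.erase x).erase y) := by
      rw [← eVec_insert hyR, Finset.insert_erase hyx]
    have ev2 : eVec n (B.erase y) = eVec n {x} + eVec n ((B.erase x).erase y) := by
      rw [← eVec_insert hxR, Finset.erase_right_comm, Finset.insert_erase hxy']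
    have e3 := (eq_inv_of_mul_eq_one_right
        (hf x hx (μ - eVec n ((B.erase x).erase y)))).trans
      (eq_inv_of_mul_eq_one_right (hf y hy (μ - eVec n ((B.erase x).erase y)))).symm
    rw [ev1, ev2,
      show μ - eVec n ((B.erase x).erase y)
          + (eVec n {y} + eVec n ((B.erase x).erase y)) = μ + eVec n {y} by abel,
      show μ - eVec n ((B.erase x).erase y)
          + (eVec n {x} + eVec n ((B.erase x).erase y)) = μ + eVec n {x} by abel] at e3
    exact e3.symm


section Engine

variable {n : ℕ} {k : Type*} [Field k] {q : k}

lemma engine (Γ Γ' : ScalarSystem n k q) [CharZero k]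
    (h2 : q + q⁻¹ ≠ 0)
    (hsingle : ∀ (i j : Fin n) (lam : Fin n → ℤ), i ≠ j →
      Γ.γ {i} {j} lam = Γ'.γ {i} {j} lam)
    (N : ℕ)
    (IH : ∀ (S T : Finset (Fin n)) (lam : Fin n → ℤ), Disjoint S T →
      S.card + T.card < N → Γ.γ S T lam = Γ'.γ S T lam)
    (A : Finset (Fin n)) (j : Fin n) (hj : j ∉ A) (hA2 : 2 ≤ A.card)
    (hcard : A.card + 1 = N) (lam : Fin n → ℤ) :
    Γ.γ A {j} lam = Γ'.γ A {j} lam := by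
  obtain ⟨i, hiA⟩ := Finset.card_pos.mp (show 0 < A.card by omega)
  have hij : i ≠ j := fun h => hj (h ▸ hiA)
  set S0 := A.erase i with hS0
  have hiS0 : i ∉ S0 := Finset.notMem_erase i A
  have hjS0 : j ∉ S0 := fun h => hj (Finset.mem_of_mem_erase h)
  have hS0card : S0.card + 1 = A.card := Finset.card_erase_add_one hiA
  obtain ⟨a, haS0⟩ := Finset.card_pos.mp (show 0 < S0.card by omega)
  set A' := insert j S0 with hA'
  have hiA' : i ∉ A' := by simp [hA', hij, hiS0]
  have hA'card : A'.card = A.card := by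
    rw [hA', Finset.card_insert_of_notMem hjS0]; omega
  have hinsA : insert i S0 = A := Finset.insert_erase hiA
  have dAj : Disjoint A ({j} : Finset (Fin n)) := by simp [hj]
  have dA'i : Disjoint A' ({i} : Finset (Fin n)) := by simp [hiA']
  set t : (Fin n → ℤ) → k := fun le => Γ.γ A {j} le / Γ'.γ A {j} le with ht_def
  set σ : (Fin n → ℤ) → k := fun le => Γ.γ A' {i} le / Γ'.γ A' {i} le with hσ_def
  have htne : ∀ le, t le ≠ 0 := fun le =>
    div_ne_zero (Γ.ne_zero _ _ _ dAj) (Γ'.ne_zero _ _ _ dAj)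
  have hσne : ∀ le, σ le ≠ 0 := fun le =>
    div_ne_zero (Γ.ne_zero _ _ _ dA'i) (Γ'.ne_zero _ _ _ dA'i)
  have htval : ∀ le, Γ.γ A {j} le = t le * Γ'.γ A {j} le := fun le =>
    (div_mul_cancel₀ _ (Γ'.ne_zero _ _ _ dAj)).symm
  have hσval : ∀ le, Γ.γ A' {i} le = σ le * Γ'.γ A' {i} le := fun le =>
    (div_mul_cancel₀ _ (Γ'.ne_zero _ _ _ dA'i)).symm
  -- multiplicative relations from P1
  have hP1t : ∀ b ∈ A, ∀ le, t le * t (le + eVec n (A.erase b)) = 1 := by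
    intro b hb le
    have hbj : b ≠ j := fun h => hj (h ▸ hb)
    have h := P1x Γ Γ' hsingle N IH (A.erase b) b j (Finset.notMem_erase b A)
      (fun h' => hj (Finset.mem_of_mem_erase h')) hbj
      (by rw [Finset.card_erase_of_mem hb]; omega) le
    rw [Finset.insert_erase hb] at h
    simp only [ht_def]
    rw [div_mul_div_comm, div_eq_one_iff_eq
      (mul_ne_zero (Γ'.ne_zero _ _ _ dAj) (Γ'.ne_zero _ _ _ dAj))]
    exact h
  have hP1σ : ∀ b ∈ A', ∀ le, σ le * σ (le + eVec n (A'.erase b)) = 1 := by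
    intro b hb le
    have hbi : b ≠ i := fun h => hiA' (h ▸ hb)
    have h := P1x Γ Γ' hsingle N IH (A'.erase b) b i (Finset.notMem_erase b A')
      (fun h' => hiA' (Finset.mem_of_mem_erase h')) hbi
      (by rw [Finset.card_erase_of_mem hb]; omega) le
    rw [Finset.insert_erase hb] at h
    simp only [hσ_def]
    rw [div_mul_div_comm, div_eq_one_iff_eq
      (mul_ne_zero (Γ'.ne_zero _ _ _ dA'i) (Γ'.ne_zero _ _ _ dA'i))]
    exact h
  have hP2a : ∀ le, t (le - eVec n {j}) * σ le = 1 := by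
    intro le
    have h := P2x Γ Γ' N IH S0 i j hiS0 hjS0 hij (by omega) le
    rw [hinsA, ← hA'] at h
    simp only [ht_def, hσ_def]
    rw [div_mul_div_comm, div_eq_one_iff_eq
      (mul_ne_zero (Γ'.ne_zero _ _ _ dAj) (Γ'.ne_zero _ _ _ dA'i))]
    exact h
  have hP2b : ∀ le, σ (le - eVec n {i}) * t le = 1 := by
    intro le
    have h := P2x Γ Γ' N IH S0 j i hjS0 hiS0 (Ne.symm hij) (by omega) le
    rw [hinsA, ← hA'] at h
    simp only [ht_def, hσ_def]
    rw [div_mul_div_comm, div_eq_one_iff_eq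
      (mul_ne_zero (Γ'.ne_zero _ _ _ dA'i) (Γ'.ne_zero _ _ _ dAj))]
    exact h
  have hσ_eq : ∀ le, σ le = (t (le - eVec n {j}))⁻¹ := fun le =>
    eq_inv_of_mul_eq_one_right (hP2a le)
  have swap_t : ∀ x ∈ A, ∀ y ∈ A, ∀ μ : Fin n → ℤ,
      t (μ + eVec n {x}) = t (μ + eVec n {y}) :=
    fun x hx y hy μ => swap_gen t A hP1t hx hy μ
  have swap_s : ∀ x ∈ A', ∀ y ∈ A', ∀ μ : Fin n → ℤ,
      σ (μ + eVec n {x}) = σ (μ + eVec n {y}) :=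
    fun x hx y hy μ => swap_gen σ A' hP1σ hx hy μ
  have tswap' : ∀ x ∈ S0, ∀ μ : Fin n → ℤ,
      t (μ + eVec n {x}) = t (μ + eVec n {j}) := by
    intro x hx μ
    have h := swap_s x (by rw [hA']; exact Finset.mem_insert_of_mem hx)
      j (by rw [hA']; exact Finset.mem_insert_self _ _) (μ + eVec n {j})
    rw [hσ_eq, hσ_eq] at h
    have h' := inv_injective h
    rw [show μ + eVec n {j} + eVec n {x} - eVec n {j} = μ + eVec n {x} by abel,
        show μ + eVec n {j} + eVec n {j} - eVec n {j} = μ + eVec n {j} by abel] at h'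
    exact h'
  have I1 : ∀ x ∈ A, ∀ μ : Fin n → ℤ,
      t (μ + eVec n {x}) = t (μ + eVec n {j}) := by
    intro x hx μ
    by_cases hxi : x = i
    · rw [hxi, swap_t i hiA a (Finset.mem_of_mem_erase haS0) μ]
      exact tswap' a haS0 μ
    · exact tswap' x (Finset.mem_erase.mpr ⟨hxi, hx⟩) μ
  have I2 : ∀ μ : Fin n → ℤ, t (μ + eVec n {i} + eVec n {j}) = t μ := by
    intro μ
    have h1 := hP2b (μ + eVec n {i} + eVec n {j})
    rw [show μ + eVec n {i} + eVec n {j} - eVec n {i} = μ + eVec n {j} by abel] at h1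
    have h2 := hP2a (μ + eVec n {j})
    rw [show μ + eVec n {j} - eVec n {j} = μ by abel] at h2
    exact (eq_inv_of_mul_eq_one_right h1).trans (eq_inv_of_mul_eq_one_left h2).symm
  have I3 : ∀ μ : Fin n → ℤ, t (μ + eVec n {j} + eVec n {j}) = t μ := by
    intro μ
    rw [show μ + eVec n {j} + eVec n {j} = (μ + eVec n {j}) + eVec n {j} by abel,
      ← I1 i hiA (μ + eVec n {j}),
      show μ + eVec n {j} + eVec n {i} = μ + eVec n {i} + eVec n {j} by abel]
    exact I2 μ
  have I4 : ∀ F : Finset (Fin n), F ⊆ A → ∀ μ : Fin n → ℤ,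
      t (μ + eVec n F) = t (μ + F.card • eVec n {j}) := by
    intro F
    induction F using Finset.induction_on with
    | empty => intro _ μ; rw [eVec_empty, Finset.card_empty, zero_smul]
    | @insert x F hxF IHF =>
      intro hsub μ
      have hxA : x ∈ A := hsub (Finset.mem_insert_self _ _)
      have hFA : F ⊆ A := (Finset.subset_insert x F).trans hsub
      rw [eVec_insert hxF, Finset.card_insert_of_notMem hxF,
        show μ + (eVec n {x} + eVec n F) = (μ + eVec n {x}) + eVec n F by abel,
        IHF hFA (μ + eVec n {x}),
        show μ + eVec n {x} + F.card • eVec n {j}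
          = (μ + F.card • eVec n {j}) + eVec n {x} by abel,
        I1 x hxA (μ + F.card • eVec n {j}), add_nsmul, one_nsmul]
      congr 1
      abel
  have I5 : ∀ (c : ℕ) (μ : Fin n → ℤ), t (μ + (2 * c) • eVec n {j}) = t μ := by
    intro c
    induction c with
    | zero => intro μ; norm_num
    | succ c IHc =>
      intro μ
      rw [show 2 * (c + 1) = 2 * c + 2 by ring, add_nsmul,
        show μ + ((2 * c) • eVec n {j} + 2 • eVec n {j})
          = (μ + eVec n {j} + eVec n {j}) + (2 * c) • eVec n {j} by
            rw [two_nsmul]; abel,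
        IHc (μ + eVec n {j} + eVec n {j}), I3 μ]
  have hkey : ∀ le : Fin n → ℤ, t le * t (le + S0.card • eVec n {j}) = 1 := by
    intro le
    have h := hP1t i hiA le
    rw [← hS0, I4 S0 (hS0 ▸ Finset.erase_subset i A) le] at h
    exact h
  -- final part
  have dis : Disjoint ({i} : Finset (Fin n)) S0 := by simp [hiS0]
  have djs : Disjoint ({j} : Finset (Fin n)) S0 := by simp [hjS0]
  have hrel2G := Γ.rel2 S0 i j lam hij hiS0 hjS0
  have hrel2G' := Γ'.rel2 S0 i j lam hij hiS0 hjS0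
  rw [hinsA, ← hA'] at hrel2G hrel2G'
  rw [IH {j} S0 _ djs (by simp; omega), IH {i} S0 _ dis (by simp; omega),
    htval lam, hσval lam] at hrel2G
  have hsub : (t lam - 1) * (Γ'.γ A {j} lam * Γ'.γ {j} S0 (lam - eVec n S0))
      + (σ lam - 1) * (Γ'.γ A' {i} lam * Γ'.γ {i} S0 (lam - eVec n S0)) = 0 := by
    linear_combination hrel2G - hrel2G'
  have hPne : Γ'.γ A {j} lam * Γ'.γ {j} S0 (lam - eVec n S0) ≠ 0 :=
    mul_ne_zero (Γ'.ne_zero _ _ _ dAj) (Γ'.ne_zero _ _ _ djs)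
  have hgoal : t lam = 1 → Γ.γ A {j} lam = Γ'.γ A {j} lam := by
    intro h1; rw [htval lam, h1, one_mul]
  rcases Nat.even_or_odd S0.card with he | ho
  · -- even case
    obtain ⟨c, hc⟩ := he
    have hsq : ∀ le : Fin n → ℤ, t le * t le = 1 := by
      intro le
      have h := hkey le
      rw [hc, show c + c = 2 * c by ring, I5 c le] at h
      exact h
    have hσv : σ lam = t (lam - eVec n {j}) := by
      rw [hσ_eq lam]
      exact inv_eq_of_mul_eq_one_right (hsq (lam - eVec n {j}))
    rcases mul_self_eq_one_iff.mp (hsq lam) with h1 | hm1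
    · exact hgoal h1
    · exfalso
      rcases mul_self_eq_one_iff.mp (hsq (lam - eVec n {j})) with g1 | gm1
      · rw [hm1, hσv, g1] at hsub
        exact hPne (by linear_combination (-(1:k)/2) * hsub)
      · rw [hm1, hσv, gm1] at hsub
        exact h2 (by linear_combination -hrel2G' - (1/2 : k) * hsub)
  · -- odd case
    obtain ⟨c, hc⟩ := ho
    have hodd : ∀ le : Fin n → ℤ, t le * t (le + eVec n {j}) = 1 := by
      intro le
      have h := hkey le
      rw [hc, add_nsmul, one_nsmul,
        show le + ((2 * c) • eVec n {j} + eVec n {j})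
          = (le + eVec n {j}) + (2 * c) • eVec n {j} by abel,
        I5 c (le + eVec n {j})] at h
      exact h
    have hσt : σ lam = t lam := by
      have h1 := hodd (lam - eVec n {j})
      rw [show lam - eVec n {j} + eVec n {j} = lam by abel] at h1
      rw [hσ_eq lam]
      exact inv_eq_of_mul_eq_one_right h1
    apply hgoal
    have hz : (t lam - 1) * (q + q⁻¹) = 0 := by
      rw [hσt] at hsub
      linear_combination hsub - (t lam - 1) * hrel2G'
    rcases mul_eq_zero.mp hz with h0 | h0
    · exact sub_eq_zero.mp h0
    · exact absurd h0 h2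

end Engine

/-- Corollary 5.9: a scalar system of `SL_n`-type is determined by its
values on pairs of distinct singletons. -/
theorem scalarSystem_ext_of_singles {n : ℕ} (hn : 1 ≤ n)
    {k : Type*} [Field k] [CharZero k]
    (q : k) (hq : q ≠ 0) (hroot : ∀ m : ℤ, m ≠ 0 → q ^ m ≠ 1)
    (Γ Γ' : ScalarSystem n k q)
    (hsingle : ∀ (i j : Fin n) (lam : Fin n → ℤ), i ≠ j →
      Γ.γ {i} {j} lam = Γ'.γ {i} {j} lam) :
    ∀ (S T : Finset (Fin n)) (lam : Fin n → ℤ), Disjoint S T →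
      Γ.γ S T lam = Γ'.γ S T lam := by
  have h2 : q + q⁻¹ ≠ 0 := by
    intro h
    have hq2 : q * q = -1 := by
      field_simp at h
      linear_combination h
    have h4 : q ^ (4:ℤ) = 1 := by
      rw [show (4:ℤ) = ((4:ℕ):ℤ) from rfl, zpow_natCast]
      calc q ^ 4 = (q*q) * (q*q) := by ring
        _ = 1 := by rw [hq2]; ring
    exact hroot 4 (by norm_num) h4
  suffices H : ∀ (N : ℕ) (S T : Finset (Fin n)) (lam : Fin n → ℤ), Disjoint S T →
      S.card + T.card ≤ N → Γ.γ S T lam = Γ'.γ S T lam by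
    intro S T lam h
    exact H (S.card + T.card) S T lam h le_rfl
  intro N
  induction N with
  | zero =>
    intro S T lam _ h
    have hS : S = ∅ := Finset.card_eq_zero.mp (by omega)
    subst hS
    rw [Γ.empty_left, Γ'.empty_left]
  | succ N IHN0 =>
    have IHN : ∀ (S T : Finset (Fin n)) (lam : Fin n → ℤ), Disjoint S T →
        S.card + T.card < N + 1 → Γ.γ S T lam = Γ'.γ S T lam :=
      fun S T lam h hl => IHN0 S T lam h (by omega)
    have key1 : ∀ (S : Finset (Fin n)) (u : Fin n) (lam : Fin n → ℤ), u ∉ S →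
        S.card + 1 = N + 1 → Γ.γ S {u} lam = Γ'.γ S {u} lam := by
      intro S u lam hu hc
      rcases Nat.lt_or_ge S.card 2 with hlt | hge
      · rcases Nat.lt_or_ge S.card 1 with h0 | h1
        · rw [Finset.card_eq_zero.mp (by omega : S.card = 0)]
          rw [Γ.empty_left, Γ'.empty_left]
        · obtain ⟨v, hv⟩ := Finset.card_eq_one.mp (by omega : S.card = 1)
          subst hv
          exact hsingle v u lam (fun h => hu (by simp [h]))
      · exact engine Γ Γ' h2 hsingle (N+1) IHN S u hu hge hc lam
    intro S T lam hST hcard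
    rcases Nat.lt_or_ge (S.card + T.card) (N+1) with hlt | hge
    · exact IHN S T lam hST hlt
    have hEq : S.card + T.card = N + 1 := le_antisymm hcard hge
    rcases Finset.eq_empty_or_nonempty T with rfl | ⟨u, huT⟩
    · rw [Γ.empty_right, Γ'.empty_right]
    rcases Finset.eq_empty_or_nonempty S with rfl | hSne
    · rw [Γ.empty_left, Γ'.empty_left]
    have hSpos : 0 < S.card := Finset.card_pos.mpr hSne
    by_cases hT1 : T.card = 1
    · obtain ⟨u', hu'⟩ := Finset.card_eq_one.mp hT1
      subst hu'
      exact key1 S u' lam (Finset.disjoint_singleton_right.mp hST) (by omega)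
    · have hTpos : 0 < T.card := Finset.card_pos.mpr ⟨u, huT⟩
      have huT' : u ∉ T.erase u := Finset.notMem_erase _ _
      have hins : insert u (T.erase u) = T := Finset.insert_erase huT
      have hT'card : (T.erase u).card + 1 = T.card := Finset.card_erase_add_one huT
      have dST' : Disjoint S (T.erase u) := hST.mono_right (Finset.erase_subset _ _)
      have huS : u ∉ S := fun h => (Finset.disjoint_left.mp hST h) huT
      have dSu : Disjoint S ({u} : Finset (Fin n)) := by simp [huS]
      have dT'u : Disjoint (T.erase u) ({u} : Finset (Fin n)) := by simp [huT']
      have hUcard : (S ∪ T.erase u).card = S.card + (T.erase u).card :=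
        Finset.card_union_of_disjoint dST'
      have r := Γ.rel4 S (T.erase u) {u} lam dST' dSu dT'u
      have r' := Γ'.rel4 S (T.erase u) {u} lam dST' dSu dT'u
      rw [show T.erase u ∪ {u} = T from by
        rw [Finset.union_comm, ← Finset.insert_eq, hins]] at r r'
      rw [IHN S (T.erase u) _ dST' (by omega),
        key1 (S ∪ T.erase u) u lam (by simp [huS, huT']) (by omega),
        IHN (T.erase u) {u} _ dT'u (by simp; omega)] at r
      have hK : Γ'.γ (T.erase u) {u} lam ≠ 0 := Γ'.ne_zero _ _ _ dT'u
      exact mul_right_cancel₀ hK (by rw [← r, r'])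
end

section
/- Let γ be a scalar system of SL_n-type. Then there exist families a_{ij}, b_{ij} ∈ k, indexed by ordered pairs (i,j) of distinct elements of {1,…,n}, with each pair (a_{ij}, b_{ij}) not both zero and with a_{ij}·q^{λ_i−λ_j} − b_{ij}·q^{λ_j−λ_i} ≠ 0 for all λ ∈ ℤ^n, such that for ALL disjoint subsets S, T ⊆ {1,…,n} and all λ ∈ ℤ^n: γ(S,T;λ) · ∏_{i∈S}∏_{j∈T} (a_{ij}·q^{λ_i−λ_j} − b_{ij}·q^{λ_j−λ_i}) = ∏_{i∈S}∏_{j∈T} (a_{ij}·q^{λ_i−λ_j−1} − b_{ij}·q^{λ_j−λ_i+1}). (This explicit product form of every scalar system is the combinatorial core of the paper's classification theorem for semisimple actions of T\SL_n-type.) -/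
open Finset

namespace SSAux

variable {n : ℕ} {k : Type*} [Field k] {q : k}

lemma intInd (P : ℤ → Prop) (h0 : P 0) (hup : ∀ d, P d → P (d+1))
    (hdn : ∀ d, P d → P (d-1)) : ∀ d, P d := by
  intro d
  induction d using Int.induction_on with
  | zero => exact h0
  | succ i ih => exact hup i ih
  | pred i ih => exact hdn (-i) ih

lemma dj1 {i j : Fin n} (h : i ≠ j) : Disjoint ({i} : Finset (Fin n)) {j} := by
  simp only [Finset.disjoint_singleton_left, Finset.mem_singleton]
  exact h

lemma gamma_ne_zero (Γ : ScalarSystem n k q) {S T : Finset (Fin n)} (h : Disjoint S T)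
    (lam : Fin n → ℤ) : Γ.γ S T lam ≠ 0 :=
  left_ne_zero_of_mul_eq_one (Γ.rel1 S T lam h)

/-- purely algebraic core of the shift-invariance lemma -/
lemma key_alg {β p r w t1 t2 t3 u1 u2 u3 σ σ' τ1 τ2 ρ1 ρ2 a1 a2 a3 a4 a5 a6 : k}
    (hβ : β ≠ 0)
    (e1 : σ * u3 = t1 * r) (e2 : σ' * u3 = t2 * (β - w))
    (e3 : τ1 * u1 = t2 * w) (e4 : τ2 * u1 = t3 * (β - p))
    (e5 : ρ1 * u2 = t3 * p) (e6 : ρ2 * u2 = t1 * (β - r))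
    (h5σ : σ + σ' = β) (h5τ : τ1 + τ2 = β) (h5ρ : ρ1 + ρ2 = β)
    (f1 : (β - r) * a1 = 1) (f2 : w * a2 = 1) (g1 : u2 * a1 + u1 * a2 = β)
    (f3 : (β - w) * a3 = 1) (f4 : p * a4 = 1) (g2 : u3 * a3 + u2 * a4 = β)
    (f5 : (β - p) * a5 = 1) (f6 : r * a6 = 1) (g3 : u1 * a5 + u3 * a6 = β)
    (h6 : t1 + t2 + t3 = β^2 - 1) :
    σ = p := by
  have hu3e : β * u3 = t1 * r + t2 * (β - w) := by
    linear_combination e1 + e2 - u3 * h5σ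
  have hu1e : β * u1 = t2 * w + t3 * (β - p) := by
    linear_combination e3 + e4 - u1 * h5τ
  have hu2e : β * u2 = t3 * p + t1 * (β - r) := by
    linear_combination e5 + e6 - u2 * h5ρ
  have hB1 : u2 * w + u1 * (β - r) = β * (β - r) * w := by
    linear_combination (β - r) * w * g1 - u2 * w * f1 - u1 * (β - r) * f2
  have hB2 : u3 * p + u2 * (β - w) = β * (β - w) * p := by
    linear_combination (β - w) * p * g2 - u3 * p * f3 - u2 * (β - w) * f4
  have hB3 : u1 * r + u3 * (β - p) = β * (β - p) * r := by
    linear_combination (β - p) * r * g3 - u1 * r * f5 - u3 * (β - p) * f6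
  set K : k := β^2 - β*(p+r+w) + (p*r+r*w+w*p) with hK
  have hK3 : K * t3 = w * (β - r) := by
    linear_combination β * hB1 - w * hu2e - (β - r) * hu1e - (β - r) * w * h6
  have hK1 : K * t1 = p * (β - w) := by
    linear_combination β * hB2 - p * hu3e - (β - w) * hu2e - (β - w) * p * h6
  have hK2 : K * t2 = r * (β - p) := by
    linear_combination β * hB3 - r * hu1e - (β - p) * hu3e - (β - p) * r * h6
  have hKK : (K - 1) * β^2 = 0 := by
    linear_combination hK1 + hK2 + hK3 - K * h6
  have hKone : K = 1 := by
    rcases mul_eq_zero.mp hKK with h | h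
    · exact sub_eq_zero.mp h
    · exact absurd h (pow_ne_zero 2 hβ)
  rw [hKone, one_mul] at hK1 hK2 hK3
  have hu3v : β * u3 = β * ((β - w) * r) := by
    linear_combination hu3e + r * hK1 + (β - w) * hK2
  have hu3val : u3 = (β - w) * r := mul_left_cancel₀ hβ hu3v
  have hne : (β - w) * r ≠ 0 :=
    mul_ne_zero (left_ne_zero_of_mul_eq_one f3) (left_ne_zero_of_mul_eq_one f6)
  apply mul_right_cancel₀ hne
  linear_combination e1 - σ * hu3val + r * hK1

lemma shift_inv (Γ : ScalarSystem n k q) (hq : q ≠ 0) (hβ : q + q⁻¹ ≠ 0)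
    {i j l : Fin n} (hij : i ≠ j) (hil : i ≠ l) (hjl : j ≠ l) (lam : Fin n → ℤ) :
    Γ.γ {i} {j} (lam + eVec n {l}) = Γ.γ {i} {j} lam := by
  set β : k := q + q⁻¹ with hβdef
  have hPe : Γ.γ {j} {i} lam = β - Γ.γ {i} {j} lam := by
    linear_combination Γ.rel5 i j lam hij
  have hRe : Γ.γ {l} {j} lam = β - Γ.γ {j} {l} lam := by
    linear_combination Γ.rel5 j l lam hjl
  have hWe : Γ.γ {i} {l} lam = β - Γ.γ {l} {i} lam := by
    linear_combination Γ.rel5 i l lam hil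
  -- six rel4 instances
  have e1 := Γ.rel4 {i} {j} {l} lam (dj1 hij) (dj1 hil) (dj1 hjl)
  have e2 := Γ.rel4 {j} {i} {l} lam (dj1 hij.symm) (dj1 hjl) (dj1 hil)
  have e3 := Γ.rel4 {j} {l} {i} lam (dj1 hjl) (dj1 hij.symm) (dj1 hil.symm)
  have e4 := Γ.rel4 {l} {j} {i} lam (dj1 hjl.symm) (dj1 hil.symm) (dj1 hij.symm)
  have e5 := Γ.rel4 {l} {i} {j} lam (dj1 hil.symm) (dj1 hjl.symm) (dj1 hij)
  have e6 := Γ.rel4 {i} {l} {j} lam (dj1 hil) (dj1 hij) (dj1 hjl.symm)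
  simp only [← Finset.insert_eq] at e1 e2 e3 e4 e5 e6
  rw [Finset.pair_comm j i] at e2
  rw [Finset.pair_comm l i] at e3
  rw [Finset.pair_comm l j, Finset.pair_comm j i] at e4
  rw [Finset.pair_comm i l, Finset.pair_comm l j] at e6
  rw [hWe] at e2
  rw [hPe] at e4
  rw [hRe] at e6
  -- rel5 at shifted points
  have h5σ := Γ.rel5 i j (lam + eVec n {l}) hij
  have h5τ := Γ.rel5 j l (lam + eVec n {i}) hjl
  have h5ρ := Γ.rel5 l i (lam + eVec n {j}) hil.symm
  -- rel2 instances
  have g1 := Γ.rel2 {l} i j lam hij (by simp [hil]) (by simp [hjl])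
  have g2 := Γ.rel2 {i} j l lam hjl (by simp [hij.symm]) (by simp [hil.symm])
  have g3 := Γ.rel2 {j} l i lam hil.symm (by simp [hjl.symm]) (by simp [hij])
  rw [show insert i ({l} : Finset (Fin n)) = {i, l} from rfl, Finset.pair_comm i l] at g1
  rw [show insert j ({i} : Finset (Fin n)) = {j, i} from rfl, Finset.pair_comm j i] at g2
  rw [show insert l ({j} : Finset (Fin n)) = {l, j} from rfl, Finset.pair_comm l j] at g3
  -- rel1 instances
  have f1 := Γ.rel1 {l} {j} lam (dj1 hjl.symm)
  have f2 := Γ.rel1 {l} {i} lam (dj1 hil.symm)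
  have f3 := Γ.rel1 {i} {l} lam (dj1 hil)
  have f4 := Γ.rel1 {i} {j} lam (dj1 hij)
  have f5 := Γ.rel1 {j} {i} lam (dj1 hij.symm)
  have f6 := Γ.rel1 {j} {l} lam (dj1 hjl)
  rw [hRe] at f1
  rw [hWe] at f3
  rw [hPe] at f5
  -- rel6
  have h6 := Γ.rel6 i j l lam hij hjl hil
  rw [Finset.pair_comm l i] at h6
  have hsq : q * q + 1 + q⁻¹ * q⁻¹ = β^2 - 1 := by
    rw [hβdef]; field_simp; ring
  rw [hsq] at h6
  exact key_alg hβ e1 e2 e3 e4 e5 e6 h5σ h5τ h5ρ f1 f2 g1 f3 f4 g2 f5 f6 g3 h6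

lemma periodic_z (Γ : ScalarSystem n k q) (S T : Finset (Fin n)) (m : ℤ) :
    ∀ lam : Fin n → ℤ, Γ.γ S T (lam + m • eVec n Finset.univ) = Γ.γ S T lam := by
  refine intInd (fun m => ∀ lam, Γ.γ S T (lam + m • eVec n Finset.univ) = Γ.γ S T lam)
    ?_ ?_ ?_ m
  · intro lam; simp
  · intro d ih lam
    have h1 : lam + (d+1) • eVec n Finset.univ
        = (lam + d • eVec n Finset.univ) + eVec n Finset.univ := by
      ext x; simp [add_smul]; ring
    rw [h1, Γ.periodic, ih]
  · intro d ih lam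
    have h1 : (lam + (d-1) • eVec n Finset.univ) + eVec n Finset.univ
        = lam + d • eVec n Finset.univ := by
      ext x; simp [sub_smul]; ring
    have h2 := Γ.periodic S T (lam + (d-1) • eVec n Finset.univ)
    rw [h1] at h2
    exact h2.symm.trans (ih lam)

lemma shift_inv_z (Γ : ScalarSystem n k q) (hq : q ≠ 0) (hβ : q + q⁻¹ ≠ 0)
    {i j : Fin n} (hij : i ≠ j) {l : Fin n} (hli : l ≠ i) (hlj : l ≠ j) (m : ℤ) :
    ∀ lam, Γ.γ {i} {j} (lam + m • eVec n {l}) = Γ.γ {i} {j} lam := by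
  refine intInd (fun m => ∀ lam, Γ.γ {i} {j} (lam + m • eVec n {l}) = Γ.γ {i} {j} lam)
    ?_ ?_ ?_ m
  · intro lam; simp
  · intro d ih lam
    have h1 : lam + (d+1) • eVec n {l}
        = (lam + d • eVec n {l}) + eVec n {l} := by
      ext x; simp [add_smul]; ring
    rw [h1, shift_inv Γ hq hβ hij hli.symm hlj.symm, ih]
  · intro d ih lam
    have h1 : (lam + (d-1) • eVec n {l}) + eVec n {l} = lam + d • eVec n {l} := by
      ext x; simp [sub_smul]; ring
    have h2 := shift_inv Γ hq hβ hij hli.symm hlj.symm (lam + (d-1) • eVec n {l})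
    rw [h1] at h2
    exact h2.symm.trans (ih lam)

lemma add_inv_supp (Γ : ScalarSystem n k q) (hq : q ≠ 0) (hβ : q + q⁻¹ ≠ 0)
    {i j : Fin n} (hij : i ≠ j) :
    ∀ (s : Finset (Fin n)) (w : Fin n → ℤ), (∀ x, w x ≠ 0 → x ∈ s) → w i = 0 → w j = 0 →
      ∀ lam, Γ.γ {i} {j} (lam + w) = Γ.γ {i} {j} lam := by
  intro s
  induction s using Finset.induction_on with
  | empty =>
    intro w hsupp hwi hwj lam
    have hw : w = 0 := by
      funext x
      by_contra hx
      exact absurd (hsupp x hx) (Finset.notMem_empty x)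
    rw [hw, add_zero]
  | @insert a s ha ih =>
    intro w hsupp hwi hwj lam
    by_cases hai : a = i
    · refine ih w (fun x hx => ?_) hwi hwj lam
      rcases Finset.mem_insert.mp (hsupp x hx) with h | h
      · subst h; exact absurd (hai ▸ hwi) hx
      · exact h
    · by_cases haj : a = j
      · refine ih w (fun x hx => ?_) hwi hwj lam
        rcases Finset.mem_insert.mp (hsupp x hx) with h | h
        · subst h; exact absurd (haj ▸ hwj) hx
        · exact h
      · set w' := Function.update w a 0 with hw'def
        have hkey : lam + w = (lam + w') + (w a) • eVec n {a} := by
          ext x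
          by_cases hx : x = a
          · subst hx
            simp [hw'def, Function.update_self, eVec]
          · simp [hw'def, Function.update_of_ne hx, eVec, hx]
        rw [hkey, shift_inv_z Γ hq hβ hij hai haj (w a)]
        refine ih w' (fun x hx => ?_) ?_ ?_ lam
        · have hxa : x ≠ a := by
            intro h; subst h
            exact hx (by simp [hw'def])
          have : w x ≠ 0 := by
            simpa [hw'def, Function.update_of_ne hxa] using hx
          rcases Finset.mem_insert.mp (hsupp x this) with h | h
          · exact absurd h hxa
          · exact h
        · rw [hw'def, Function.update_of_ne (fun h => hai h.symm), hwi]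
        · rw [hw'def, Function.update_of_ne (fun h => haj h.symm), hwj]

lemma const_diff (Γ : ScalarSystem n k q) (hq : q ≠ 0) (hβ : q + q⁻¹ ≠ 0)
    {i j : Fin n} (hij : i ≠ j) (lam mu : Fin n → ℤ)
    (h : lam i - lam j = mu i - mu j) :
    Γ.γ {i} {j} mu = Γ.γ {i} {j} lam := by
  set w : Fin n → ℤ := fun x => mu x - lam x - (mu i - lam i) * (eVec n Finset.univ x)
    with hwdef
  have hkey : mu = (lam + (mu i - lam i) • eVec n Finset.univ) + w := by
    ext x; simp only [hwdef, Pi.add_apply, Pi.smul_apply, smul_eq_mul]; ring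
  have hwi : w i = 0 := by simp [hwdef, eVec]
  have hwj : w j = 0 := by
    simp only [hwdef, eVec, Finset.mem_univ, if_pos, mul_one]
    omega
  rw [hkey, add_inv_supp Γ hq hβ hij Finset.univ w (fun x _ => Finset.mem_univ x) hwi hwj,
    periodic_z]

/-- base value of the scalar system at `λ = 0` -/
def cc (Γ : ScalarSystem n k q) (i j : Fin n) : k := Γ.γ {i} {j} 0

/-- the linear form `g_{ij}(d) = a_{ij} q^d − b_{ij} q^{−d}` -/
noncomputable def gP (Γ : ScalarSystem n k q) (i j : Fin n) (d : ℤ) : k :=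
  (q - cc Γ i j) * q ^ d - (q⁻¹ - cc Γ i j) * q ^ (-d)

lemma gthree (Γ : ScalarSystem n k q) (hq : q ≠ 0) (i j : Fin n) (d : ℤ) :
    gP Γ i j (d+1) + gP Γ i j (d-1) = (q + q⁻¹) * gP Γ i j d := by
  have hd : q ^ d ≠ 0 := zpow_ne_zero d hq
  simp only [gP, neg_add, neg_sub, zpow_add₀ hq, zpow_sub₀ hq, zpow_one, zpow_neg]
  field_simp
  ring

lemma gsymm (Γ : ScalarSystem n k q) {i j : Fin n} (hij : i ≠ j) (d : ℤ) :
    gP Γ j i d = gP Γ i j (-d) := by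
  have h5 : cc Γ j i + cc Γ i j = q + q⁻¹ := Γ.rel5 j i 0 hij.symm
  simp only [gP, neg_neg]
  linear_combination (q ^ (-d) - q ^ d) * h5

lemma sform_base (Γ : ScalarSystem n k q) (hq : q ≠ 0) (h2 : q * q ≠ 1)
    {i j : Fin n} (hij : i ≠ j) :
    ∀ d : ℤ, gP Γ i j d ≠ 0 ∧
      Γ.γ {i} {j} (fun x => if x = i then d else 0) * gP Γ i j d = gP Γ i j (d-1) := by
  have hrec : ∀ d : ℤ,
      Γ.γ {i} {j} (fun x => if x = i then d+1 else 0)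
        * ((q + q⁻¹) - Γ.γ {i} {j} (fun x => if x = i then d else 0)) = 1 := by
    intro d
    have h1 := Γ.rel1 {i} {j} (fun x => if x = i then d+1 else 0) (dj1 hij)
    have harg : (fun x => if x = i then d+1 else 0) - eVec n {i}
        = (fun x => if x = i then d else 0) := by
      ext x
      by_cases hx : x = i <;> simp [eVec, hx]
    rw [harg] at h1
    have h5 : Γ.γ {j} {i} (fun x => if x = i then d else 0)
        = (q + q⁻¹) - Γ.γ {i} {j} (fun x => if x = i then d else 0) := by
      linear_combination Γ.rel5 i j (fun x => if x = i then d else 0) hij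
    rw [h5] at h1
    exact h1
  refine intInd _ ?_ ?_ ?_
  · constructor
    · have : gP Γ i j 0 = q - q⁻¹ := by simp only [gP, zpow_zero, neg_zero, mul_one]; ring
      rw [this]
      intro h
      apply h2
      have hqq : q = q⁻¹ := by linear_combination h
      calc q * q = q * q⁻¹ := by rw [← hqq]
      _ = 1 := mul_inv_cancel₀ hq
    · have h0 : (fun x => if x = i then (0:ℤ) else 0) = (0 : Fin n → ℤ) := by
        ext x; simp
      rw [h0]
      show cc Γ i j * gP Γ i j 0 = gP Γ i j (0-1)
      have : (0 - 1 : ℤ) = -1 := by norm_num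
      rw [this]
      simp only [gP, zpow_zero, zpow_neg, zpow_one, neg_neg]
      ring
  · rintro d ⟨hgd, hφd⟩
    have h3 := gthree Γ hq i j d
    have hmain : Γ.γ {i} {j} (fun x => if x = i then d+1 else 0) * gP Γ i j (d+1)
        = gP Γ i j d := by
      linear_combination gP Γ i j d * hrec d
        + Γ.γ {i} {j} (fun x => if x = i then d+1 else 0) * h3
        + Γ.γ {i} {j} (fun x => if x = i then d+1 else 0) * hφd
    have hne : gP Γ i j (d+1) ≠ 0 := by
      intro h
      rw [h, mul_zero] at hmain
      exact hgd hmain.symm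
    refine ⟨hne, ?_⟩
    rw [show (d+1-1 : ℤ) = d from by ring]
    exact hmain
  · rintro d ⟨hgd, hφd⟩
    have hφdne : Γ.γ {i} {j} (fun x => if x = i then d else 0) ≠ 0 :=
      gamma_ne_zero Γ (dj1 hij) _
    have hgm : gP Γ i j (d-1) ≠ 0 := hφd ▸ mul_ne_zero hφdne hgd
    have h3 := gthree Γ hq i j (d-1)
    rw [show (d-1+1 : ℤ) = d from by ring] at h3
    have hr := hrec (d-1)
    rw [show (d-1+1 : ℤ) = d from by ring] at hr
    refine ⟨hgm, ?_⟩
    linear_combination ((q + q⁻¹) - Γ.γ {i} {j} (fun x => if x = i then d-1 else 0)) * hφd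
      - gP Γ i j d * hr - h3

lemma gne (Γ : ScalarSystem n k q) (hq : q ≠ 0) (h2 : q * q ≠ 1)
    {i j : Fin n} (hij : i ≠ j) (d : ℤ) : gP Γ i j d ≠ 0 :=
  (sform_base Γ hq h2 hij d).1

lemma sform (Γ : ScalarSystem n k q) (hq : q ≠ 0) (hβ : q + q⁻¹ ≠ 0) (h2 : q * q ≠ 1)
    {i j : Fin n} (hij : i ≠ j) (lam : Fin n → ℤ) :
    Γ.γ {i} {j} lam * gP Γ i j (lam i - lam j) = gP Γ i j (lam i - lam j - 1) := by
  have hb := sform_base Γ hq h2 hij (lam i - lam j)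
  have hc : Γ.γ {i} {j} (fun x => if x = i then lam i - lam j else 0)
      = Γ.γ {i} {j} lam := by
    apply const_diff Γ hq hβ hij
    simp [hij.symm]
  rw [← hc]
  exact hb.2

noncomputable def GG (Γ : ScalarSystem n k q) (S T : Finset (Fin n)) (lam : Fin n → ℤ) : k :=
  ∏ i ∈ S, ∏ j ∈ T, gP Γ i j (lam i - lam j)

noncomputable def HH (Γ : ScalarSystem n k q) (S T : Finset (Fin n)) (lam : Fin n → ℤ) : k :=
  ∏ i ∈ S, ∏ j ∈ T, gP Γ i j (lam i - lam j - 1)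

lemma GG_sr (Γ : ScalarSystem n k q) (S : Finset (Fin n)) (u : Fin n) (lam : Fin n → ℤ) :
    GG Γ S {u} lam = ∏ v ∈ S, gP Γ v u (lam v - lam u) := by
  unfold GG
  exact Finset.prod_congr rfl fun v _ => Finset.prod_singleton _ _

lemma HH_sr (Γ : ScalarSystem n k q) (S : Finset (Fin n)) (u : Fin n) (lam : Fin n → ℤ) :
    HH Γ S {u} lam = ∏ v ∈ S, gP Γ v u (lam v - lam u - 1) := by
  unfold HH
  exact Finset.prod_congr rfl fun v _ => Finset.prod_singleton _ _

lemma GG_shift (Γ : ScalarSystem n k q) {S T : Finset (Fin n)} {u : Fin n}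
    (hu1 : u ∉ S) (hu2 : u ∉ T) (lam : Fin n → ℤ) :
    GG Γ S T (lam + eVec n {u}) = GG Γ S T lam := by
  unfold GG
  refine Finset.prod_congr rfl fun v hv => Finset.prod_congr rfl fun j hj => ?_
  have hvu : v ≠ u := fun h => hu1 (h ▸ hv)
  have hju : j ≠ u := fun h => hu2 (h ▸ hj)
  have h1 : (lam + eVec n {u}) v = lam v := by
    simp [eVec, Finset.mem_singleton, hvu]
  have h2 : (lam + eVec n {u}) j = lam j := by
    simp [eVec, Finset.mem_singleton, hju]
  rw [h1, h2]

lemma HH_shift (Γ : ScalarSystem n k q) {S T : Finset (Fin n)} {u : Fin n}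
    (hu1 : u ∉ S) (hu2 : u ∉ T) (lam : Fin n → ℤ) :
    HH Γ S T (lam + eVec n {u}) = HH Γ S T lam := by
  unfold HH
  refine Finset.prod_congr rfl fun v hv => Finset.prod_congr rfl fun j hj => ?_
  have hvu : v ≠ u := fun h => hu1 (h ▸ hv)
  have hju : j ≠ u := fun h => hu2 (h ▸ hj)
  have h1 : (lam + eVec n {u}) v = lam v := by
    simp [eVec, Finset.mem_singleton, hvu]
  have h2 : (lam + eVec n {u}) j = lam j := by
    simp [eVec, Finset.mem_singleton, hju]
  rw [h1, h2]

lemma GG_rev (Γ : ScalarSystem n k q) {S' : Finset (Fin n)} {u : Fin n}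
    (hu : u ∉ S') (lam : Fin n → ℤ) :
    GG Γ {u} S' (lam - eVec n S') = ∏ v ∈ S', gP Γ v u (lam v - lam u - 1) := by
  unfold GG
  rw [Finset.prod_singleton]
  refine Finset.prod_congr rfl fun v hv => ?_
  have hvu : v ≠ u := fun h => hu (h ▸ hv)
  have h1 : (lam - eVec n S') u = lam u := by simp [eVec, hu]
  have h2 : (lam - eVec n S') v = lam v - 1 := by simp [eVec, hv]
  rw [h1, h2, gsymm Γ hvu]
  congr 1
  ring

lemma HH_rev (Γ : ScalarSystem n k q) {S' : Finset (Fin n)} {u : Fin n}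
    (hu : u ∉ S') (lam : Fin n → ℤ) :
    HH Γ {u} S' (lam - eVec n S') = ∏ v ∈ S', gP Γ v u (lam v - lam u) := by
  unfold HH
  rw [Finset.prod_singleton]
  refine Finset.prod_congr rfl fun v hv => ?_
  have hvu : v ≠ u := fun h => hu (h ▸ hv)
  have h1 : (lam - eVec n S') u = lam u := by simp [eVec, hu]
  have h2 : (lam - eVec n S') v = lam v - 1 := by simp [eVec, hv]
  rw [h1, h2, gsymm Γ hvu]
  congr 1
  ring

lemma claim_all (Γ : ScalarSystem n k q) (hq : q ≠ 0) (hβ : q + q⁻¹ ≠ 0) (h2 : q * q ≠ 1) :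
    ∀ (N : ℕ) (S T : Finset (Fin n)), S.card + T.card ≤ N → Disjoint S T →
      ∀ lam, Γ.γ S T lam * GG Γ S T lam = HH Γ S T lam := by
  intro N
  induction N with
  | zero =>
    intro S T hcard hd lam
    have hS : S = ∅ := Finset.card_eq_zero.mp (by omega)
    subst hS
    simp [GG, HH, Γ.empty_left]
  | succ N IH =>
    have hsing : ∀ (V : Finset (Fin n)) (u : Fin n), u ∉ V → V.card + 1 ≤ N + 1 →
        ∀ lam, Γ.γ V {u} lam * GG Γ V {u} lam = HH Γ V {u} lam := by
      intro V u hu hcard lam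
      rcases Finset.eq_empty_or_nonempty V with rfl | hV
      · simp [GG, HH, Γ.empty_left]
      obtain ⟨s, hs⟩ := hV
      have hV' : insert s (V.erase s) = V := Finset.insert_erase hs
      set S' := V.erase s with hS'def
      have hsS' : s ∉ S' := Finset.notMem_erase s V
      have huS' : u ∉ S' := fun h => hu (Finset.erase_subset s V h)
      have hsu : s ≠ u := fun h => hu (h ▸ hs)
      rcases Finset.eq_empty_or_nonempty S' with hS'e | hS'ne
      · -- V = {s} : the singleton case
        have hVs : V = {s} := by rw [← hV', hS'e]; rfl
        subst hVs
        rw [GG_sr, HH_sr, Finset.prod_singleton, Finset.prod_singleton]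
        exact sform Γ hq hβ h2 hsu lam
      · -- |V| ≥ 2
        rw [← hV']
        have hcard' : S'.card + 1 ≤ N := by
          have h1 : V.card = S'.card + 1 := by
            rw [← hV', Finset.card_insert_of_notMem hsS']
          omega
        have hdS's : Disjoint S' {s} := Finset.disjoint_singleton_right.mpr hsS'
        have hdS'u : Disjoint S' {u} := Finset.disjoint_singleton_right.mpr huS'
        have hdsu : Disjoint ({s} : Finset (Fin n)) {u} := dj1 hsu
        set δ : ℤ := lam s - lam u with hδ
        set Gp2 : k := ∏ v ∈ S', gP Γ v u (lam v - lam u) with hGp2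
        set Hp2 : k := ∏ v ∈ S', gP Γ v u (lam v - lam u - 1) with hHp2
        set Gp1 : k := ∏ v ∈ S', gP Γ v s (lam v - lam s) with hGp1
        set Hp1 : k := ∏ v ∈ S', gP Γ v s (lam v - lam s - 1) with hHp1
        have hGp2ne : Gp2 ≠ 0 := Finset.prod_ne_zero_iff.mpr fun v hv =>
          gne Γ hq h2 (show v ≠ u by rintro rfl; exact huS' hv) _
        have hGp1ne : Gp1 ≠ 0 := Finset.prod_ne_zero_iff.mpr fun v hv =>
          gne Γ hq h2 (show v ≠ s by rintro rfl; exact hsS' hv) _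
        -- IH instances
        have hA : Γ.γ {u} S' (lam - eVec n S') * Hp2 = Gp2 := by
          have := IH {u} S' (by simp only [Finset.card_singleton]; omega)
            (Finset.disjoint_singleton_left.mpr huS')
            (lam - eVec n S')
          rwa [GG_rev Γ huS', HH_rev Γ huS'] at this
        have hB : Γ.γ {s} S' (lam - eVec n S') * Hp1 = Gp1 := by
          have := IH {s} S' (by simp only [Finset.card_singleton]; omega)
            (Finset.disjoint_singleton_left.mpr hsS')
            (lam - eVec n S')
          rwa [GG_rev Γ hsS', HH_rev Γ hsS'] at this
        have hP1 : Γ.γ S' {s} (lam + eVec n {u}) * Gp1 = Hp1 := by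
          have := IH S' {s} (by simp only [Finset.card_singleton]; omega) hdS's
            (lam + eVec n {u})
          rwa [GG_shift Γ huS' (Finset.notMem_singleton.mpr hsu.symm),
            HH_shift Γ huS' (Finset.notMem_singleton.mpr hsu.symm), GG_sr, HH_sr] at this
        have hP2 : Γ.γ S' {u} (lam + eVec n {s}) * Gp2 = Hp2 := by
          have := IH S' {u} (by simp only [Finset.card_singleton]; omega) hdS'u
            (lam + eVec n {s})
          rwa [GG_shift Γ hsS' (Finset.notMem_singleton.mpr hsu),
            HH_shift Γ hsS' (Finset.notMem_singleton.mpr hsu), GG_sr, HH_sr] at this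
        have hZ1 : Γ.γ {s} {u} lam * gP Γ s u δ = gP Γ s u (δ - 1) :=
          sform Γ hq hβ h2 hsu lam
        have hZ2 : Γ.γ {u} {s} lam * gP Γ s u δ = gP Γ s u (δ + 1) := by
          have h := sform Γ hq hβ h2 hsu.symm lam
          rw [gsymm Γ hsu, gsymm Γ hsu] at h
          rw [show -(lam u - lam s) = δ from by rw [hδ]; ring,
            show -(lam u - lam s - 1) = δ + 1 from by rw [hδ]; ring] at h
          exact h
        -- structural relations
        have hL := Γ.rel2 S' s u lam hsu hsS' huS'
        have hEa := Γ.rel4 S' {s} {u} lam hdS's hdS'u hdsu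
        have hEb := Γ.rel4 S' {u} {s} lam hdS'u hdS's hdsu.symm
        rw [Finset.union_comm S' {s}, ← Finset.insert_eq, ← Finset.insert_eq] at hEa
        rw [Finset.union_comm S' {u}, ← Finset.insert_eq, ← Finset.insert_eq,
          Finset.pair_comm u s] at hEb
        -- abbreviations
        set X := Γ.γ (insert s S') {u} lam with hX
        set Y := Γ.γ (insert u S') {s} lam with hY
        set Q := Γ.γ S' {s, u} lam with hQ
        set A := Γ.γ {u} S' (lam - eVec n S') with hA'
        set B := Γ.γ {s} S' (lam - eVec n S') with hB'
        set P1 := Γ.γ S' {s} (lam + eVec n {u}) with hP1'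
        set P2 := Γ.γ S' {u} (lam + eVec n {s}) with hP2'
        set Z1 := Γ.γ {s} {u} lam with hZ1'
        set Z2 := Γ.γ {u} {s} lam with hZ2'
        have hP1ne : P1 ≠ 0 := gamma_ne_zero Γ hdS's _
        have hAP2 : A * P2 = 1 := by
          apply mul_right_cancel₀ hGp2ne
          linear_combination A * hP2 + hA
        have hBP1 : B * P1 = 1 := by
          apply mul_right_cancel₀ hGp1ne
          linear_combination B * hP1 + hB
        have hXA : (P1 * P2 * gP Γ s u δ) * (X * A) = Q * gP Γ s u (δ - 1) := by
          linear_combination (P2 * A * gP Γ s u δ) * hEa + (Q * Z1 * gP Γ s u δ) * hAP2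
            + Q * hZ1
        have hYB : (P1 * P2 * gP Γ s u δ) * (Y * B) = Q * gP Γ s u (δ + 1) := by
          linear_combination (P1 * B * gP Γ s u δ) * hEb + (Q * Z2 * gP Γ s u δ) * hBP1
            + Q * hZ2
        have hQ1 : Q * (gP Γ s u (δ - 1) + gP Γ s u (δ + 1))
            = (q + q⁻¹) * (P1 * P2 * gP Γ s u δ) := by
          linear_combination (P1 * P2 * gP Γ s u δ) * hL - hXA - hYB
        have h3 := gthree Γ hq s u δ
        have hQ2 : Q * ((q + q⁻¹) * gP Γ s u δ) = (P1 * P2) * ((q + q⁻¹) * gP Γ s u δ) := by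
          linear_combination hQ1 - Q * h3
        have hQv : Q = P1 * P2 :=
          mul_right_cancel₀ (mul_ne_zero hβ (gne Γ hq h2 hsu δ)) hQ2
        have hXv : X = P2 * Z1 := by
          apply mul_left_cancel₀ hP1ne
          linear_combination hEa + Z1 * hQv
        -- final computation
        rw [GG_sr, HH_sr, Finset.prod_insert hsS', Finset.prod_insert hsS']
        rw [← hGp2, ← hHp2, ← hδ, hXv]
        linear_combination (P2 * Gp2) * hZ1 + gP Γ s u (δ - 1) * hP2
    -- general T
    intro S T hcard hd lam
    rcases Finset.eq_empty_or_nonempty T with rfl | hT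
    · simp [GG, HH, Γ.empty_right]
    obtain ⟨u, hu⟩ := hT
    have hT' : insert u (T.erase u) = T := Finset.insert_erase hu
    set T' := T.erase u with hT'def
    have huT' : u ∉ T' := Finset.notMem_erase u T
    have huS : u ∉ S := Finset.disjoint_right.mp hd hu
    have hdST' : Disjoint S T' := hd.mono_right (Finset.erase_subset u T)
    have hdSu : Disjoint S {u} := Finset.disjoint_singleton_right.mpr huS
    have hdT'u : Disjoint T' {u} := Finset.disjoint_singleton_right.mpr huT'
    rcases Finset.eq_empty_or_nonempty T' with hT'e | hT'ne
    · have hTu : T = {u} := by rw [← hT', hT'e]; rfl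
      subst hTu
      exact hsing S u huS hcard lam
    rcases Finset.eq_empty_or_nonempty S with rfl | hSne
    · simp [GG, HH, Γ.empty_left]
    have hS1 : 1 ≤ S.card := Finset.card_pos.mpr hSne
    have hTcard : T.card = T'.card + 1 := by
      rw [← hT', Finset.card_insert_of_notMem huT']
    have hrel := Γ.rel4 S T' {u} lam hdST' hdSu hdT'u
    rw [Finset.union_comm T' {u}, ← Finset.insert_eq, hT'] at hrel
    -- IH / hsing instances
    set GSu : k := ∏ i ∈ S, gP Γ i u (lam i - lam u) with hGSu
    set HSu : k := ∏ i ∈ S, gP Γ i u (lam i - lam u - 1) with hHSu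
    set GT'u : k := ∏ i ∈ T', gP Γ i u (lam i - lam u) with hGT'u
    set HT'u : k := ∏ i ∈ T', gP Γ i u (lam i - lam u - 1) with hHT'u
    have hHT'une : HT'u ≠ 0 := Finset.prod_ne_zero_iff.mpr fun v hv =>
      gne Γ hq h2 (show v ≠ u by rintro rfl; exact huT' hv) _
    have hP : Γ.γ S T' (lam + eVec n {u}) * GG Γ S T' lam = HH Γ S T' lam := by
      have := IH S T' (by omega) hdST' (lam + eVec n {u})
      rwa [GG_shift Γ huS huT', HH_shift Γ huS huT'] at this
    have hW : Γ.γ T' {u} lam * GT'u = HT'u := by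
      have hc : T'.card + 1 ≤ N := by omega
      have := IH T' {u} (by simp only [Finset.card_singleton]; omega) hdT'u lam
      rwa [GG_sr, HH_sr] at this
    have hR : Γ.γ (S ∪ T') {u} lam * (GSu * GT'u) = HSu * HT'u := by
      have hcu : (S ∪ T').card + 1 ≤ N + 1 := by
        rw [Finset.card_union_of_disjoint hdST']; omega
      have huST' : u ∉ S ∪ T' := by
        simp [Finset.mem_union, huS, huT']
      have := hsing (S ∪ T') u huST' hcu lam
      rwa [GG_sr, HH_sr, Finset.prod_union hdST', Finset.prod_union hdST'] at this
    -- split the target products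
    have hGsplit : GG Γ S T lam = GSu * GG Γ S T' lam := by
      unfold GG
      rw [hGSu, ← Finset.prod_mul_distrib]
      refine Finset.prod_congr rfl fun i hi => ?_
      rw [← hT', Finset.prod_insert huT']
    have hHsplit : HH Γ S T lam = HSu * HH Γ S T' lam := by
      unfold HH
      rw [hHSu, ← Finset.prod_mul_distrib]
      refine Finset.prod_congr rfl fun i hi => ?_
      rw [← hT', Finset.prod_insert huT']
    rw [hGsplit, hHsplit]
    set X := Γ.γ S T lam with hXd
    set P := Γ.γ S T' (lam + eVec n {u}) with hPd
    set R := Γ.γ (S ∪ T') {u} lam with hRd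
    set W := Γ.γ T' {u} lam with hWd
    set G2 := GG Γ S T' lam with hG2d
    set H2 := HH Γ S T' lam with hH2d
    apply mul_right_cancel₀ hHT'une
    linear_combination (-(X * GSu * G2)) * hW - (GSu * GT'u * G2) * hrel
      + (R * (GSu * GT'u)) * hP + H2 * hR

end SSAux

/-- Every scalar system of `SL_n`-type has the explicit product form
`γ(S,T;λ) = ∏_{i∈S}∏_{j∈T} (a_{ij} q^{λ_i−λ_j−1} − b_{ij} q^{λ_j−λ_i+1})
  / (a_{ij} q^{λ_i−λ_j} − b_{ij} q^{λ_j−λ_i})`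
for parameters `[a_{ij} : b_{ij}] ∈ ℙ¹(k)` avoiding `q^{2ℤ}`. -/
theorem scalarSystem_explicit_form {n : ℕ} (hn : 1 ≤ n)
    {k : Type*} [Field k] [CharZero k]
    (q : k) (hq : q ≠ 0) (hroot : ∀ m : ℤ, m ≠ 0 → q ^ m ≠ 1)
    (Γ : ScalarSystem n k q) :
    ∃ a b : Fin n → Fin n → k,
      (∀ i j : Fin n, i ≠ j → ¬(a i j = 0 ∧ b i j = 0)) ∧
      (∀ (i j : Fin n), i ≠ j → ∀ lam : Fin n → ℤ,
        a i j * q ^ (lam i - lam j) - b i j * q ^ (lam j - lam i) ≠ 0) ∧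
      (∀ (S T : Finset (Fin n)), Disjoint S T → ∀ lam : Fin n → ℤ,
        Γ.γ S T lam *
            ∏ i ∈ S, ∏ j ∈ T,
              (a i j * q ^ (lam i - lam j) - b i j * q ^ (lam j - lam i))
          = ∏ i ∈ S, ∏ j ∈ T,
              (a i j * q ^ (lam i - lam j - 1) - b i j * q ^ (lam j - lam i + 1))) := by
  classical
  have hq2 : q * q ≠ 1 := by
    intro h
    apply hroot 2 (by norm_num)
    rw [show (2:ℤ) = ((2:ℕ):ℤ) from rfl, zpow_natCast, pow_two]
    exact h
  have hβ : q + q⁻¹ ≠ 0 := by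
    intro h
    have hqq : q * q = -1 := by
      linear_combination q * h - mul_inv_cancel₀ hq
    apply hroot 4 (by norm_num)
    rw [show (4:ℤ) = ((4:ℕ):ℤ) from rfl, zpow_natCast]
    calc q ^ (4:ℕ) = (q*q)*(q*q) := by ring
    _ = 1 := by rw [hqq]; norm_num
  refine ⟨fun i j => q - SSAux.cc Γ i j, fun i j => q⁻¹ - SSAux.cc Γ i j, ?_, ?_, ?_⟩
  · intro i j hij ⟨ha, hb⟩
    apply hq2
    have ha' : q - SSAux.cc Γ i j = 0 := ha
    have hb' : q⁻¹ - SSAux.cc Γ i j = 0 := hb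
    have : q = q⁻¹ := by linear_combination ha' - hb'
    calc q * q = q * q⁻¹ := by rw [← this]
    _ = 1 := mul_inv_cancel₀ hq
  · intro i j hij lam
    have hconv : (q - SSAux.cc Γ i j) * q ^ (lam i - lam j)
        - (q⁻¹ - SSAux.cc Γ i j) * q ^ (lam j - lam i)
        = SSAux.gP Γ i j (lam i - lam j) := by
      unfold SSAux.gP
      rw [show lam j - lam i = -(lam i - lam j) from by ring]
    rw [hconv]
    exact SSAux.gne Γ hq hq2 hij _
  · intro S T hd lam
    have hG : (∏ i ∈ S, ∏ j ∈ T,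
        ((q - SSAux.cc Γ i j) * q ^ (lam i - lam j)
          - (q⁻¹ - SSAux.cc Γ i j) * q ^ (lam j - lam i)))
        = SSAux.GG Γ S T lam := by
      refine Finset.prod_congr rfl fun i _ => Finset.prod_congr rfl fun j _ => ?_
      unfold SSAux.gP
      rw [show lam j - lam i = -(lam i - lam j) from by ring]
    have hH : (∏ i ∈ S, ∏ j ∈ T,
        ((q - SSAux.cc Γ i j) * q ^ (lam i - lam j - 1)
          - (q⁻¹ - SSAux.cc Γ i j) * q ^ (lam j - lam i + 1)))
        = SSAux.HH Γ S T lam := by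
      refine Finset.prod_congr rfl fun i _ => Finset.prod_congr rfl fun j _ => ?_
      unfold SSAux.gP
      rw [show lam j - lam i + 1 = -(lam i - lam j - 1) from by ring]
    rw [hG, hH]
    exact SSAux.claim_all Γ hq hβ hq2 (S.card + T.card) S T le_rfl hd lam
end
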